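/- In the centrality game with m = 2, if node s has exactly one node r in its two-step in-neighborhood N_s^{-2}(x), then the best response set of s is exactly { {r, v} : v ∈ V \ {s, r} }. -/
import Mathlib


open Finset Matrix

/-- Normalized adjacency matrix of the out-degree-2 graph `G(x)` where each node `i`
places out-links to the two nodes of `x i` (entries `1/2` on out-links). -/
noncomputable def R2 {V : Type*} [Fintype V] [DecidableEq V] (x : V → Finset V) :
    Matrix V V ℝ :=
  Matrix.of fun i j => if j ∈ x i then (1 : ℝ) / 2 else 0

/-- Utility of player `s` in the game `Γ(V, β, η, 2)`: its Bonacich centrality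
`((1-β)(I - β R(x)ᵀ)⁻¹ η)_s` in the formed graph. -/
noncomputable def util2 {V : Type*} [Fintype V] [DecidableEq V]
    (β : ℝ) (η : V → ℝ) (x : V → Finset V) (s : V) : ℝ :=
  ((1 - β) • ((1 - β • (R2 x)ᵀ)⁻¹).mulVec η) s

lemma R2_det_ne {V : Type*} [Fintype V] [DecidableEq V] {β : ℝ} (hβ0 : 0 < β) (hβ1 : β < 1)
    (y : V → Finset V) (hy : ∀ i, (y i).card = 2) :
    ((1 : Matrix V V ℝ) - β • (R2 y)ᵀ).det ≠ 0 := by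
  have h1 : ((1 : Matrix V V ℝ) - β • (R2 y)ᵀ) = ((1 : Matrix V V ℝ) - β • R2 y)ᵀ := by
    rw [Matrix.transpose_sub, Matrix.transpose_one, Matrix.transpose_smul]
  rw [h1, Matrix.det_transpose]
  intro hdet
  obtain ⟨v, hv0, hv⟩ := (Matrix.exists_mulVec_eq_zero_iff).2 hdet
  have key : ∀ i, v i = β * ∑ j ∈ y i, (1/2 : ℝ) * v j := by
    intro i
    have h := congrFun hv i
    rw [Matrix.sub_mulVec, Matrix.one_mulVec, Matrix.smul_mulVec] at h
    have hR : (R2 y).mulVec v i = ∑ j ∈ y i, (1/2 : ℝ) * v j := by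
      simp only [Matrix.mulVec, dotProduct, R2, Matrix.of_apply, ite_mul, zero_mul]
      rw [Finset.sum_ite_mem, Finset.univ_inter]
    simp only [Pi.sub_apply, Pi.smul_apply, smul_eq_mul, hR, Pi.zero_apply] at h
    linarith
  obtain ⟨i1, hi1⟩ := Function.ne_iff.1 hv0
  obtain ⟨i0, -, hmax⟩ := Finset.exists_max_image Finset.univ (fun j => |v j|) ⟨i1, Finset.mem_univ i1⟩
  have hb : |v i0| ≤ β * |v i0| := by
    calc |v i0| = |β * ∑ j ∈ y i0, (1/2 : ℝ) * v j| := by rw [← key i0]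
    _ = β * |∑ j ∈ y i0, (1/2 : ℝ) * v j| := by rw [abs_mul, abs_of_pos hβ0]
    _ ≤ β * ∑ j ∈ y i0, |(1/2 : ℝ) * v j| := by
        gcongr; exact Finset.abs_sum_le_sum_abs _ _
    _ ≤ β * ∑ j ∈ y i0, (1/2 : ℝ) * |v i0| := by
        gcongr with j hj
        rw [abs_mul, abs_of_pos (by norm_num : (0:ℝ) < 1/2)]
        exact mul_le_mul_of_nonneg_left (hmax j (Finset.mem_univ j)) (by norm_num)
    _ = β * |v i0| := by
        rw [Finset.sum_const, hy i0, nsmul_eq_mul]; ring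
  have h0 : |v i0| = 0 := by nlinarith [abs_nonneg (v i0)]
  apply hi1
  have := hmax i1 (Finset.mem_univ i1)
  rw [h0] at this
  simpa using abs_eq_zero.1 (le_antisymm this (abs_nonneg _))

lemma util_val {V : Type*} [Fintype V] [DecidableEq V] {β : ℝ} (hβ0 : 0 < β) (hβ1 : β < 1)
    (η : V → ℝ) (x : V → Finset V) (hx : ∀ i, (x i).card = 2 ∧ i ∉ x i)
    (s r : V) (hrs : r ≠ s) (hsr : s ∈ x r)
    (h2 : ∀ j, j ≠ s → j ≠ r → s ∉ x j)
    (h4 : ∀ j, j ≠ s → r ∉ x j)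
    (a : Finset V) (ha2 : a.card = 2) (has : s ∉ a) :
    util2 β η (Function.update x s a) s =
      (1 - β) * (if r ∈ a then (η s + β/2 * η r)/(1 - β^2/4) else (η s + β/2 * η r)) := by
  set x' := Function.update x s a with hx'def
  have hy : ∀ i, (x' i).card = 2 := by
    intro i
    by_cases h : i = s
    · subst h; rw [hx'def, Function.update_self]; exact ha2
    · rw [hx'def, Function.update_of_ne h]; exact (hx i).1
  set M : Matrix V V ℝ := (1 : Matrix V V ℝ) - β • (R2 x')ᵀ with hMdef
  have hdet : M.det ≠ 0 := R2_det_ne hβ0 hβ1 x' hy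
  set w : V → ℝ := M⁻¹.mulVec η with hwdef
  have hMw : M.mulVec w = η := by
    rw [hwdef, Matrix.mulVec_mulVec, Matrix.mul_nonsing_inv _ (isUnit_iff_ne_zero.2 hdet),
      Matrix.one_mulVec]
  have hu : util2 β η x' s = (1 - β) * w s := by
    simp [util2, hwdef, hMdef]
  have row : ∀ i, w i - β * ∑ j, (if i ∈ x' j then (1/2 : ℝ) * w j else 0) = η i := by
    intro i
    have h := congrFun hMw i
    rw [hMdef, Matrix.sub_mulVec, Matrix.one_mulVec, Matrix.smul_mulVec] at h
    have hR : (R2 x')ᵀ.mulVec w i = ∑ j, (if i ∈ x' j then (1/2 : ℝ) * w j else 0) := by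
      simp only [Matrix.mulVec, dotProduct, Matrix.transpose_apply, R2,
        Matrix.of_apply, ite_mul, zero_mul]
    simp only [Pi.sub_apply, Pi.smul_apply, smul_eq_mul, hR] at h
    exact h
  have hxs : x' s = a := Function.update_self s a x
  have hxr : x' r = x r := Function.update_of_ne hrs a x
  have Es : w s - β * ((1/2) * w r) = η s := by
    have h := row s
    rwa [Finset.sum_eq_single r
      (by
        intro b _ hbr
        rw [if_neg]
        by_cases hbs : b = s
        · subst hbs; rw [hxs]; exact has
        · rw [hx'def, Function.update_of_ne hbs]; exact h2 b hbs hbr)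
      (by intro h; exact absurd (Finset.mem_univ r) h), if_pos (by rw [hxr]; exact hsr)] at h
  have Er : w r - β * (if r ∈ a then (1/2 : ℝ) * w s else 0) = η r := by
    have h := row r
    rwa [Finset.sum_eq_single s
      (by
        intro b _ hbs
        rw [if_neg]
        rw [hx'def, Function.update_of_ne hbs]
        exact h4 b hbs)
      (by intro h; exact absurd (Finset.mem_univ s) h), hxs] at h
  have hD : (0:ℝ) < 1 - β^2/4 := by nlinarith
  rw [hu]
  by_cases hr : r ∈ a
  · rw [if_pos hr] at Er ⊢
    have hws : w s = (η s + β/2 * η r) / (1 - β^2/4) := by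
      rw [eq_div_iff (ne_of_gt hD)]
      linear_combination Es + (β/2) * Er
    rw [hws]
  · rw [if_neg hr] at Er ⊢
    have hws : w s = η s + β/2 * η r := by linear_combination Es + (β/2) * Er
    rw [hws]

/-- in `Γ(V,β,η,2)`, if the two-step in-neighborhood of `s` is exactly
`{r}`, then the best response set of `s` is exactly the set of pairs `{r, v}` with
`v ∈ V \ {s, r}`, i.e. the valid actions containing `r`. -/
theorem best_response_single_two_step_in_neighbor_m2
    {V : Type*} [Fintype V] [DecidableEq V]
    (β : ℝ) (hβ0 : 0 < β) (hβ1 : β < 1)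
    (η : V → ℝ) (hη : ∀ i, 0 < η i) (hηsum : ∑ i, η i = 1)
    (x : V → Finset V) (hx : ∀ i, (x i).card = 2 ∧ i ∉ x i)
    (s r : V)
    (hN : {i : V | i ≠ s ∧ (s ∈ x i ∨ ∃ t, s ∈ x t ∧ t ∈ x i)} = {r}) :
    {a : Finset V | a.card = 2 ∧ s ∉ a ∧ ∀ b : Finset V, b.card = 2 → s ∉ b →
        util2 β η (Function.update x s b) s ≤ util2 β η (Function.update x s a) s}
      = {a : Finset V | a.card = 2 ∧ s ∉ a ∧ r ∈ a} := by
  have hmem : ∀ i : V, (i ≠ s ∧ (s ∈ x i ∨ ∃ t, s ∈ x t ∧ t ∈ x i)) ↔ i = r := by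
    intro i
    have := Set.ext_iff.mp hN i
    simpa using this
  have hrs : r ≠ s := ((hmem r).2 rfl).1
  have hsr : s ∈ x r := by
    rcases ((hmem r).2 rfl).2 with h | ⟨t, hst, htr⟩
    · exact h
    · have hts : t ≠ s := fun e => (hx s).2 (e ▸ hst)
      have : t = r := (hmem t).1 ⟨hts, Or.inl hst⟩
      exact this ▸ hst
  have h2 : ∀ j, j ≠ s → j ≠ r → s ∉ x j := fun j hjs hjr hm =>
    hjr ((hmem j).1 ⟨hjs, Or.inl hm⟩)
  have h4 : ∀ j, j ≠ s → r ∉ x j := by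
    intro j hjs hm
    rcases eq_or_ne j r with h | h
    · exact (hx r).2 (h ▸ hm)
    · exact h ((hmem j).1 ⟨hjs, Or.inr ⟨r, hsr, hm⟩⟩)
  obtain ⟨v, hv, hvr⟩ := Finset.exists_mem_ne (by rw [(hx s).1]; norm_num) r
  have hvs : v ≠ s := fun e => (hx s).2 (e ▸ hv)
  set b0 : Finset V := {r, v} with hb0def
  have hb0card : b0.card = 2 := Finset.card_pair (Ne.symm hvr)
  have hb0s : s ∉ b0 := by
    simp only [hb0def, Finset.mem_insert, Finset.mem_singleton]
    push_neg
    exact ⟨Ne.symm hrs, Ne.symm hvs⟩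
  have hb0r : r ∈ b0 := by simp [hb0def]
  set A : ℝ := η s + β/2 * η r with hAdef
  have hA : 0 < A := by have := hη s; have := hη r; positivity
  have hD : (0:ℝ) < 1 - β^2/4 := by nlinarith
  have hlt : A < A / (1 - β^2/4) := by
    rw [lt_div_iff₀ hD]
    have h5 : 0 < A * (β^2/4) := by positivity
    calc A * (1 - β^2/4) = A - A * (β^2/4) := by ring
    _ < A := by linarith
  have key : ∀ c : Finset V, c.card = 2 → s ∉ c →
      util2 β η (Function.update x s c) s =
        (1 - β) * (if r ∈ c then A / (1 - β^2/4) else A) :=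
    fun c hc2 hcs => util_val hβ0 hβ1 η x hx s r hrs hsr h2 h4 c hc2 hcs
  have h1β : (0:ℝ) < 1 - β := by linarith
  ext a
  simp only [Set.mem_setOf_eq]
  constructor
  · rintro ⟨ha2, has, hbr⟩
    refine ⟨ha2, has, ?_⟩
    by_contra hr
    have h1 := hbr b0 hb0card hb0s
    rw [key a ha2 has, key b0 hb0card hb0s, if_neg hr, if_pos hb0r] at h1
    nlinarith
  · rintro ⟨ha2, has, hr⟩
    refine ⟨ha2, has, fun b hb2 hbs => ?_⟩
    rw [key a ha2 has, key b hb2 hbs, if_pos hr]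
    by_cases hrb : r ∈ b
    · rw [if_pos hrb]
    · rw [if_neg hrb]; nlinarith
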